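/- arXiv:math/0402013 — 6 statements merged into one kernel-verified Lean document; each statement's English description precedes it below -/
import Mathlib

section
/- The generating metric function V(g;w) = sqrt(Q(g;w))·j(g;w), where Q = 1 + gw + w² and j(g;w) = exp((G/2)(π/2 + arctan(G/2) − arctan(w/h + G/2))) with G = g/h and h = sqrt(1−g²/4), satisfies V' = wV/Q and V'' = V/Q² (derivatives with respect to w). -/
private lemma aux1 (g h q : ℝ) (hh : h ≠ 0) (hq : q ≠ 0) :
    g/h/2 * -(h/q) = -(g/(2*q)) := by field_simp

private lemma aux2 (h q : ℝ) (hh : h ≠ 0) (hq : q ≠ 0) :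
    0 - 1/(q/h^2) * (1/h) = -(h/q) := by field_simp; ring

private lemma aux3 (g x s j : ℝ) (hs : s ≠ 0) :
    (g+2*x)/(2*s)*j + s*(j*(-(g/(2*s^2)))) = x*(s*j)/s^2 := by
  field_simp; ring

private lemma aux4 (g w v q : ℝ) (hq : q = 1 + g*w + w^2) (hq0 : q ≠ 0) :
    ((1*v + w*(w*v/q))*q - w*v*(g+2*w))/q^2 = v/q^2 := by
  have e : w*(w*v/q)*q = w*w*v := by rw [mul_assoc, div_mul_cancel₀ _ hq0]; ring
  rw [div_left_inj' (pow_ne_zero 2 hq0), add_mul, e, hq]; ring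

private lemma aux5 (g h x : ℝ) (hh : h ≠ 0) (hh2 : h^2 = 1 - g^2/4) :
    1 + (x/h + g/h/2)^2 = (1+g*x+x^2)/h^2 := by
  have h3 : (1+g*x+x^2) = h^2 + (x+g/2)^2 := by linear_combination -hh2
  rw [h3]; field_simp

theorem stmt_4 (g : ℝ) (hg1 : -2 < g) (hg2 : g < 2) (w : ℝ) :
    let h := Real.sqrt (1 - g^2/4)
    let G := g / h
    let Q : ℝ → ℝ := fun w => 1 + g*w + w^2
    let Φ : ℝ → ℝ := fun w => Real.pi/2 + Real.arctan (G/2) - Real.arctan (w/h + G/2)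
    let j : ℝ → ℝ := fun w => Real.exp ((G/2) * Φ w)
    let V : ℝ → ℝ := fun w => Real.sqrt (Q w) * j w
    deriv V w = w * V w / Q w ∧ deriv (deriv V) w = V w / (Q w)^2 := by
  intro h G Q Φ j V
  have hpos : (0:ℝ) < 1 - g^2/4 := by nlinarith
  have hh : 0 < h := Real.sqrt_pos.mpr hpos
  have hh2 : h^2 = 1 - g^2/4 := Real.sq_sqrt hpos.le
  have hhne : h ≠ 0 := ne_of_gt hh
  have hQ : ∀ x : ℝ, 0 < Q x := by
    intro x
    show 0 < 1 + g*x + x^2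
    nlinarith [sq_nonneg (x + g/2)]
  have hQder : ∀ x : ℝ, HasDerivAt Q (g + 2*x) x := by
    intro x
    have h1 : HasDerivAt (fun y : ℝ => 1 + g*y + y^2) (0 + g*1 + ↑2*x^(2-1)) x :=
      ((hasDerivAt_const x (1:ℝ)).add ((hasDerivAt_id x).const_mul g)).add
        (hasDerivAt_pow 2 x)
    have h2 : HasDerivAt Q (0 + g*1 + ↑2*x^(2-1)) x := h1
    convert h2 using 1
    norm_num
  have hV : ∀ x : ℝ, HasDerivAt V (x * V x / Q x) x := by
    intro x
    have hQne : Q x ≠ 0 := ne_of_gt (hQ x)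
    have hA : HasDerivAt (fun y : ℝ => y/h + G/2) (1/h) x := by
      have := ((hasDerivAt_id x).div_const h).add_const (G/2)
      simpa using this
    have hkey : 1 + (x/h + G/2)^2 = Q x / h^2 := aux5 g h x hhne hh2
    have hΦ : HasDerivAt Φ (-(h / Q x)) x := by
      have h2 := (hasDerivAt_const x (Real.pi/2 + Real.arctan (G/2))).sub hA.arctan
      have heq : (0 - 1 / (1 + (x/h + G/2)^2) * (1/h) : ℝ) = -(h / Q x) := by
        rw [hkey]; exact aux2 h (Q x) hhne hQne
      rw [heq] at h2
      exact h2
    have hj : HasDerivAt j (j x * (-(g/(2*Q x)))) x := by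
      have h3 := (hΦ.const_mul (G/2)).exp
      have heq : (G/2 * -(h / Q x) : ℝ) = -(g/(2*Q x)) := aux1 g h (Q x) hhne hQne
      rw [heq] at h3
      exact h3
    have hS : HasDerivAt (fun y => Real.sqrt (Q y)) ((g+2*x)/(2*Real.sqrt (Q x))) x :=
      (hQder x).sqrt (ne_of_gt (hQ x))
    have hprod := hS.mul hj
    have hsq : Real.sqrt (Q x) ^ 2 = Q x := Real.sq_sqrt (hQ x).le
    have hsne : Real.sqrt (Q x) ≠ 0 := ne_of_gt (Real.sqrt_pos.mpr (hQ x))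
    have heq := aux3 g x (Real.sqrt (Q x)) (j x) hsne
    rw [hsq] at heq
    rw [heq] at hprod
    exact hprod
  have hdV : deriv V = fun x => x * V x / Q x := funext fun x => (hV x).deriv
  constructor
  · exact (hV w).deriv
  · rw [hdV]
    have hN : HasDerivAt (fun x => x * V x) (1 * V w + w * (w * V w / Q w)) w :=
      (hasDerivAt_id w).mul (hV w)
    have hdiv := hN.div (hQder w) (ne_of_gt (hQ w))
    have heq := aux4 g w (V w) (Q w) rfl (ne_of_gt (hQ w))
    rw [heq] at hdiv
    exact hdiv.deriv
end

section
/- For the Finsleroid-Minkowski plane parameterization R¹(f) = 𝕊in f, R²(f) = ℂos f (unit vectors K = 1), the strong convexity criterion quotient ((R²)''(R¹)' − (R²)'(R¹)'')/((R²)' R¹ − R² (R¹)') equals 1/h², which is positive; hence the Finsleroid indicatrix on the Minkowski plane is strongly convex. -/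
lemma hd_aux (a b c : ℝ) (f : ℝ) :
    HasDerivAt (fun x => (b * Real.sin x + c * Real.cos x) * Real.exp (a * (x - Real.pi/2)))
      (((b*a - c) * Real.sin f + (c*a + b) * Real.cos f) * Real.exp (a * (f - Real.pi/2))) f := by
  have h1 : HasDerivAt (fun x => b * Real.sin x + c * Real.cos x)
      (b * Real.cos f + c * (-Real.sin f)) f :=
    ((Real.hasDerivAt_sin f).const_mul b).add ((Real.hasDerivAt_cos f).const_mul c)
  have h2 : HasDerivAt (fun x : ℝ => a * (x - Real.pi/2)) a f := by
    simpa using ((hasDerivAt_id f).sub_const (Real.pi/2)).const_mul a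
  have h3 := h2.exp
  have := h1.mul h3
  refine this.congr_deriv ?_
  ring

lemma deriv_aux (a b c : ℝ) :
    deriv (fun x => (b * Real.sin x + c * Real.cos x) * Real.exp (a * (x - Real.pi/2)))
      = fun x => ((b*a - c) * Real.sin x + (c*a + b) * Real.cos x) * Real.exp (a * (x - Real.pi/2)) :=
  funext fun x => (hd_aux a b c x).deriv

theorem stmt_10 (g : ℝ) (hg1 : -2 < g) (hg2 : g < 2) (f : ℝ) :
    let h := Real.sqrt (1 - g^2/4)
    let G := g / h
    let J : ℝ → ℝ := fun f => Real.exp (-(G/2) * (f - Real.pi/2))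
    let R1 : ℝ → ℝ := fun f => Real.sin f / (h * J f)
    let R2 : ℝ → ℝ := fun f => (Real.cos f - (G/2) * Real.sin f) / J f
    (deriv (deriv R2) f * deriv R1 f - deriv R2 f * deriv (deriv R1) f)
      / (deriv R2 f * R1 f - R2 f * deriv R1 f) = 1/h^2
    ∧ 0 < 1/h^2 := by
  intro h G J R1 R2
  have hpos : (0:ℝ) < 1 - g^2/4 := by nlinarith
  have hh : 0 < h := Real.sqrt_pos.mpr hpos
  have hh2 : h^2 = 1 - g^2/4 := Real.sq_sqrt hpos.le
  set a := G/2 with ha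
  -- rewrite R1 and R2 in product form
  have hR1 : R1 = fun x => ((1/h) * Real.sin x + 0 * Real.cos x) * Real.exp (a * (x - Real.pi/2)) := by
    funext x
    simp only [R1, J, ha]
    rw [neg_mul, Real.exp_neg]
    field_simp
    ring
  have hR2 : R2 = fun x => ((-a) * Real.sin x + 1 * Real.cos x) * Real.exp (a * (x - Real.pi/2)) := by
    funext x
    simp only [R2, J, ha]
    rw [neg_mul, Real.exp_neg]
    field_simp
    ring
  have hE : 0 < Real.exp (a * (f - Real.pi/2)) := Real.exp_pos _
  set E := Real.exp (a * (f - Real.pi/2)) with hEdef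
  set s := Real.sin f
  set c := Real.cos f
  have hsc : s^2 + c^2 = 1 := Real.sin_sq_add_cos_sq f
  -- first derivatives
  have d1 : deriv R1 f = ((1/h*a - 0) * s + (0*a + 1/h) * c) * E := by
    rw [hR1, deriv_aux]
  have d2 : deriv R2 f = ((-a*a - 1) * s + (1*a + -a) * c) * E := by
    rw [hR2, deriv_aux]
  -- second derivatives
  have dd1 : deriv (deriv R1) f =
      (((1/h*a - 0)*a - (0*a + 1/h)) * s + ((0*a + 1/h)*a + (1/h*a - 0)) * c) * E := by
    rw [hR1, deriv_aux, deriv_aux]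
  have dd2 : deriv (deriv R2) f =
      (((-a*a - 1)*a - (1*a + -a)) * s + ((1*a + -a)*a + (-a*a - 1)) * c) * E := by
    rw [hR2, deriv_aux, deriv_aux]
  have hv1 : R1 f = ((1/h) * s + 0 * c) * E := by rw [hR1]
  have hv2 : R2 f = ((-a) * s + 1 * c) * E := by rw [hR2]
  -- value of 1 + a^2
  have ha2 : 1 + a^2 = 1/h^2 := by
    have haa : a = g / (2*h) := by
      rw [ha]; simp only [G]; rw [div_div]; ring_nf
    rw [haa, eq_div_iff (pow_ne_zero 2 hh.ne')]
    field_simp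
    nlinarith [hh2]
  constructor
  · rw [d1, d2, dd1, dd2, hv1, hv2]
    have hnum : (((-a*a - 1)*a - (1*a + -a)) * s + ((1*a + -a)*a + (-a*a - 1)) * c) * E *
        (((1/h*a - 0) * s + (0*a + 1/h) * c) * E) -
        ((-a*a - 1) * s + (1*a + -a) * c) * E *
        ((((1/h*a - 0)*a - (0*a + 1/h)) * s + ((0*a + 1/h)*a + (1/h*a - 0)) * c) * E)
        = -(1 + a^2) * E^2 / h := by
      linear_combination (-(1 + a^2) * E^2 / h) * hsc
    have hden : ((-a*a - 1) * s + (1*a + -a) * c) * E * (((1/h) * s + 0 * c) * E) -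
        ((-a) * s + 1 * c) * E * (((1/h*a - 0) * s + (0*a + 1/h) * c) * E)
        = -E^2 / h := by
      linear_combination (-E^2 / h) * hsc
    rw [hnum, hden, ← ha2]
    have hdne : -E^2 / h ≠ 0 := by
      have : 0 < E^2 / h := by positivity
      intro hcon; rw [neg_div] at hcon; linarith [neg_eq_zero.mp hcon ▸ this]
    rw [div_eq_iff hdne]
    ring
  · positivity
end

section
/- If Z = Z(q) is implicitly defined by the Finsleroid indicatrix equation K(g;q,Z) = 1 with Z + gq ≠ 0, then dZ/dq = −q/(Z + gq) and d²Z/dq² = −B/(Z+gq)³, where B = Z² + gqZ + q². -/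
noncomputable def Kfun (g q Z : ℝ) : ℝ :=
  Real.sqrt (Z^2 + g*q*Z + q^2) *
    Real.exp ((g / Real.sqrt (1 - g^2/4) / 2) *
      ((if 0 ≤ Z then Real.pi/2 else -(Real.pi/2)) +
        Real.arctan (g / Real.sqrt (1 - g^2/4) / 2) -
        Real.arctan (q / (Real.sqrt (1 - g^2/4) * Z) + g / Real.sqrt (1 - g^2/4) / 2)))

open Real Filter

lemma Kfun_def (g q Z : ℝ) : Kfun g q Z =
  Real.sqrt (Z^2 + g*q*Z + q^2) *
    Real.exp ((g / Real.sqrt (1 - g^2/4) / 2) *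
      ((if 0 ≤ Z then Real.pi/2 else -(Real.pi/2)) +
        Real.arctan (g / Real.sqrt (1 - g^2/4) / 2) -
        Real.arctan (q / (Real.sqrt (1 - g^2/4) * Z) + g / Real.sqrt (1 - g^2/4) / 2))) := rfl

lemma log_eq {g : ℝ} (x Zx : ℝ) (hK : Kfun g x Zx = 1)
    (hB : 0 < Zx^2 + g*x*Zx + x^2) :
    Real.log (Zx^2 + g*x*Zx + x^2) / 2 +
      (g / Real.sqrt (1 - g^2/4) / 2) *
        ((if 0 ≤ Zx then Real.pi/2 else -(Real.pi/2)) +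
          Real.arctan (g / Real.sqrt (1 - g^2/4) / 2) -
          Real.arctan (x / (Real.sqrt (1 - g^2/4) * Zx) + g / Real.sqrt (1 - g^2/4) / 2)) = 0 := by
  have h1 : Real.log (Kfun g x Zx) = 0 := by rw [hK, Real.log_one]
  unfold Kfun at h1
  rw [Real.log_mul (by positivity) (Real.exp_ne_zero _), Real.log_exp,
    Real.log_sqrt hB.le] at h1
  exact h1

lemma Bpos {g : ℝ} (hg1 : -2 < g) (hg2 : g < 2) {x z : ℝ} (h : z ≠ 0 ∨ x ≠ 0) :
    0 < z^2 + g*x*z + x^2 := by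
  have hsq : (Real.sqrt (1 - g^2/4))^2 = 1 - g^2/4 := Real.sq_sqrt (by nlinarith)
  have h4 : 0 < 1 - g^2/4 := by nlinarith
  rcases h with h | h
  · nlinarith [sq_nonneg (x + g*z/2), sq_pos_of_ne_zero h]
  · nlinarith [sq_nonneg (z + g*x/2), sq_pos_of_ne_zero h]

lemma step (g : ℝ) (hg1 : -2 < g) (hg2 : g < 2)
    (Z : ℝ → ℝ) (U : Set ℝ) (hU : IsOpen U)
    (hZ : ContDiffOn ℝ 2 Z U)
    (hK : ∀ x ∈ U, Kfun g x (Z x) = 1)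
    (x : ℝ) (hx : x ∈ U) (hZx : Z x ≠ 0) :
    deriv Z x * (Z x + g*x) + x = 0 := by
  set hv := Real.sqrt (1 - g^2/4) with hhv
  have hv0 : 0 < hv := Real.sqrt_pos.mpr (by nlinarith)
  have hvsq : hv^2 = 1 - g^2/4 := Real.sq_sqrt (by nlinarith)
  set σ : ℝ := if 0 ≤ Z x then Real.pi/2 else -(Real.pi/2) with hσ
  set V : Set ℝ := U ∩ (fun y => Z y * Z x) ⁻¹' Set.Ioi 0 with hVdef
  have hVopen : IsOpen V :=
    (hZ.continuousOn.mul continuousOn_const).isOpen_inter_preimage hU isOpen_Ioi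
  have hxV : x ∈ V := by
    refine ⟨hx, ?_⟩
    have : 0 < Z x * Z x := by rcases hZx.lt_or_gt with h | h <;> nlinarith
    simpa [Set.mem_preimage] using this
  set L : ℝ → ℝ := fun y => Real.log (Z y^2 + g*y*Z y + y^2) / 2 +
      (g / hv / 2) * (σ + Real.arctan (g / hv / 2) -
        Real.arctan (y / (hv * Z y) + g / hv / 2)) with hLdef
  have hsign : ∀ y ∈ V, Z y ≠ 0 ∧
      ((if 0 ≤ Z y then Real.pi/2 else -(Real.pi/2)) = σ) := by
    intro y hy
    have hprod : 0 < Z y * Z x := hy.2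
    constructor
    · intro h0; rw [h0] at hprod; simp at hprod
    · rw [hσ]
      rcases hZx.lt_or_gt with h | h
      · have : Z y < 0 := by nlinarith
        rw [if_neg (by linarith), if_neg (by linarith)]
      · have : 0 < Z y := by nlinarith
        rw [if_pos (by linarith), if_pos (by linarith)]
  have hL0 : ∀ y ∈ V, L y = 0 := by
    intro y hy
    have hZy := (hsign y hy).1
    have hBy : 0 < Z y^2 + g*y*Z y + y^2 := Bpos hg1 hg2 (Or.inl hZy)
    have := log_eq y (Z y) (hK y hy.1) hBy
    rw [(hsign y hy).2] at this
    exact this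
  -- derivative of Z at x
  have hZd : HasDerivAt Z (deriv Z x) x :=
    (((hZ.contDiffAt (hU.mem_nhds hx)).differentiableAt (by norm_num)).hasDerivAt)
  set z := Z x
  set z' := deriv Z x
  have hBx : 0 < z^2 + g*x*z + x^2 := Bpos hg1 hg2 (Or.inl hZx)
  -- derivative of B
  have hBd : HasDerivAt (fun y => Z y^2 + g*y*Z y + y^2)
      (2*z*z' + (g*z + g*x*z') + 2*x) x := by
    have h1 : HasDerivAt (fun y => Z y^2) (2*z*z') x := by
      simpa [pow_one, mul_comm, mul_assoc] using hZd.fun_pow 2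
    have h2 : HasDerivAt (fun y => g*y*Z y) (g*z + g*x*z') x := by
      have := (((hasDerivAt_id x).const_mul g).fun_mul hZd)
      simpa [mul_comm, mul_assoc] using this
    have h3 : HasDerivAt (fun y : ℝ => y^2) (2*x) x := by
      simpa using hasDerivAt_pow 2 x
    exact (h1.add h2).add h3
  set ux := x / (hv * z) + g / hv / 2 with hux
  have hhz : hv * z ≠ 0 := mul_ne_zero hv0.ne' hZx
  have hud : HasDerivAt (fun y => y / (hv * Z y) + g / hv / 2)
      ((1 * (hv*z) - x * (hv*z')) / (hv*z)^2) x := by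
    exact ((hasDerivAt_id x).div (hZd.const_mul hv) hhz).add_const _
  have harct : HasDerivAt (fun y => Real.arctan (y / (hv * Z y) + g / hv / 2))
      ((1/(1+ux^2)) * ((1 * (hv*z) - x * (hv*z')) / (hv*z)^2)) x :=
    by have := (Real.hasDerivAt_arctan ux).comp x hud; exact this
  have hLd : HasDerivAt L
      ((2*z*z' + (g*z + g*x*z') + 2*x) / (z^2 + g*x*z + x^2) / 2 +
        (g / hv / 2) * (-((1/(1+ux^2)) * ((1 * (hv*z) - x * (hv*z')) / (hv*z)^2)))) x := by
    exact ((hBd.log hBx.ne').div_const 2).add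
      ((harct.const_sub (σ + Real.arctan (g / hv / 2))).const_mul (g / hv / 2))
  have hE0 : (2*z*z' + (g*z + g*x*z') + 2*x) / (z^2 + g*x*z + x^2) / 2 +
        (g / hv / 2) * (-((1/(1+ux^2)) * ((1 * (hv*z) - x * (hv*z')) / (hv*z)^2))) = 0 := by
    have heq : L =ᶠ[nhds x] fun _ => 0 :=
      Filter.eventually_of_mem (hVopen.mem_nhds hxV) hL0
    have := heq.deriv_eq
    rw [hLd.deriv] at this
    simpa using this
  -- algebra
  have hkey : 1 + ux^2 = (z^2 + g*x*z + x^2) / (hv^2 * z^2) := by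
    rw [hux]
    field_simp
    linear_combination (4*z^2) * hvsq
  rw [hkey] at hE0
  have hBne := hBx.ne'
  field_simp at hE0
  have hfac : (z'*(z+g*x)+x) * (4*hv*hv^2*z^2*(z^2+g*x*z+x^2)) = 0 := by
    rw [div_eq_iff (by nlinarith [hBne] : z*(z+g*x)+x^2 ≠ 0)] at hE0
    linear_combination (2*hv*hv^2*z^2*(z^2+g*x*z+x^2)) * hE0
  rcases mul_eq_zero.mp hfac with h | h
  · exact h
  · exfalso
    have : (4:ℝ)*hv*hv^2*z^2*(z^2+g*x*z+x^2) ≠ 0 := by positivity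
    exact this h

set_option maxHeartbeats 1000000 in
lemma zq_ne (g : ℝ) (hg1 : -2 < g) (hg2 : g < 2)
    (Z : ℝ → ℝ) (U : Set ℝ) (hU : IsOpen U) (q : ℝ) (hqU : q ∈ U)
    (hZ : ContDiffOn ℝ 2 Z U)
    (hK : ∀ x ∈ U, Kfun g x (Z x) = 1)
    (hne : ∀ x ∈ U, Z x + g*x ≠ 0) : Z q ≠ 0 := by
  intro hq0
  have hgq : g * q ≠ 0 := by have := hne q hqU; rwa [hq0, zero_add] at this
  have hg0 : g ≠ 0 := fun h => hgq (by rw [h, zero_mul])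
  have hqne : q ≠ 0 := fun h => hgq (by rw [h, mul_zero])
  have hqabs : 0 < |q| := abs_pos.mpr hqne
  set hv := Real.sqrt (1 - g^2/4) with hhv
  have hv0 : 0 < hv := Real.sqrt_pos.mpr (by nlinarith)
  have hvsq : hv^2 = 1 - g^2/4 := Real.sq_sqrt (by nlinarith)
  set Gv := g / hv with hGv
  have hGv0 : Gv ≠ 0 := div_ne_zero hg0 hv0.ne'
  set A := Real.arctan (Gv / 2) with hA
  have hA1 : A < π/2 := Real.arctan_lt_pi_div_two _
  have hA2 : -(π/2) < A := Real.neg_pi_div_two_lt_arctan _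
  set Bf : ℝ → ℝ := fun y => Z y^2 + g*y*Z y + y^2 with hBf
  have hBq : 0 < Bf q := Bpos hg1 hg2 (Or.inr hqne)
  have hq_eq : Real.log q + (Gv/2) * (π/2) = 0 := by
    have h := log_eq q (Z q) (hK q hqU) (by rw [hBf] at hBq; exact hBq)
    rw [hq0] at h
    norm_num at h
    rw [← hhv, ← hGv] at h
    linarith [h]
  set c : ℝ → ℝ := fun y => A + Real.log (Bf y) / Gv with hc
  have hcq : c q = A - π/2 := by
    have hlq : Real.log (Bf q) = -(Gv * (π/2)) := by
      have h1 : Real.log (Bf q) = Real.log (q^2) := by simp [hBf, hq0]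
      rw [h1, Real.log_pow]; push_cast; linarith [hq_eq]
    rw [hc]; simp only [hlq]
    field_simp
    ring
  have key : ∀ x ∈ U, 0 < Bf x →
      Real.arctan (x / (hv * Z x) + Gv/2) =
        (if 0 ≤ Z x then π/2 else -(π/2)) + c x := by
    intro x hx hBx
    have h := log_eq x (Z x) (hK x hx) (by rw [hBf] at hBx; exact hBx)
    rw [← hhv, ← hGv] at h
    set t := Real.arctan (x / (hv * Z x) + Gv/2) with ht
    set s := (if 0 ≤ Z x then π/2 else -(π/2)) with hs
    -- h : log (Bf x) / 2 + (Gv/2) * (s + A - t) = 0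
    have h2 : Gv * t = Gv * s + Gv * A + Real.log (Bf x) := by
      rw [hBf]; nlinarith [h]
    have h3 : t = s + (A + Real.log (Bf x) / Gv) := by
      field_simp
      linarith [h2]
    simpa [hc] using h3
  set ε := (π/2 - |A|)/2 with hε
  have habsA : |A| < π/2 := abs_lt.mpr ⟨hA2, hA1⟩
  have hεpos : 0 < ε := by rw [hε]; linarith
  have hAep : A + ε < π/2 := by have := le_abs_self A; rw [hε]; linarith
  have hAem : -(π/2) < A - ε := by have := neg_abs_le A; rw [hε]; linarith
  set M := |Real.tan (A+ε)| + |Real.tan (A-ε)| + |Gv|/2 + 1 with hM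
  have hM0 : 0 < M := by positivity
  set η := (|q|/2) / (hv * M) with hη
  have hη0 : 0 < η := by positivity
  have e1 : ∀ᶠ x in nhds q, x ∈ U := eventually_of_mem (hU.mem_nhds hqU) (fun x h => h)
  have hZc : ContinuousAt Z q := hZ.continuousOn.continuousAt (hU.mem_nhds hqU)
  have e2 : ∀ᶠ x in nhds q, |q|/2 < |x| := by
    have h : ContinuousAt (fun x : ℝ => |x|) q := continuous_abs.continuousAt
    exact h.tendsto.eventually_const_lt (by linarith)
  have e3 : ∀ᶠ x in nhds q, |Z x| < η := by
    have h : Tendsto (fun x => |Z x|) (nhds q) (nhds |Z q|) := hZc.abs.tendsto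
    rw [hq0, abs_zero] at h
    exact h.eventually_lt_const hη0
  have hBc : ContinuousAt Bf q := by
    rw [hBf]
    exact ((hZc.pow 2).add ((continuousAt_const.mul continuousAt_id).mul hZc)).add
      (continuousAt_id.pow 2)
  have hcc : ContinuousAt c q := by
    rw [hc]
    exact continuousAt_const.add
      (((Real.continuousAt_log hBq.ne').comp hBc).div_const _)
  have e4 : ∀ᶠ x in nhds q, |c x - (A - π/2)| < ε := by
    have ht : Tendsto c (nhds q) (nhds (A - π/2)) := hcq ▸ hcc.tendsto
    have h := Metric.tendsto_nhds.mp ht ε hεpos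
    filter_upwards [h] with x hx
    rwa [Real.dist_eq] at hx
  have evZ : ∀ᶠ x in nhds q, Z x = 0 := by
    filter_upwards [e1, e2, e3, e4] with x hxU hx2 hx3 hx4
    by_contra hZx0
    have hBx : 0 < Bf x := Bpos hg1 hg2 (Or.inl hZx0)
    have harc := key x hxU hBx
    have hrange := abs_lt.mp hx4
    rcases lt_or_gt_of_ne hZx0 with hneg | hpos
    · rw [if_neg (not_le.mpr hneg)] at harc
      have hlb := Real.neg_pi_div_two_lt_arctan (x / (hv * Z x) + Gv/2)
      rw [harc] at hlb
      have hAle := le_abs_self A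
      rw [hε] at hrange
      linarith [hrange.2]
    · rw [if_pos hpos.le] at harc
      set u := x / (hv * Z x) + Gv/2 with hu
      have h5 : Real.arctan u < A + ε := by rw [harc]; linarith [hrange.2]
      have h6 : A - ε < Real.arctan u := by rw [harc]; linarith [hrange.1]
      have h7 : u < Real.tan (A+ε) := by
        have h := Real.arctan_strictMono.lt_iff_lt (a := u) (b := Real.tan (A+ε))
        rw [Real.arctan_tan (by linarith) hAep] at h
        exact h.mp h5
      have h8 : Real.tan (A-ε) < u := by
        have h := Real.arctan_strictMono.lt_iff_lt (a := Real.tan (A-ε)) (b := u)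
        rw [Real.arctan_tan hAem (by linarith)] at h
        exact h.mp h6
      have hZxlt : Z x < η := lt_of_le_of_lt (le_abs_self _) hx3
      have hhz : 0 < hv * Z x := mul_pos hv0 hpos
      have h9 : M < |x| / (hv * Z x) := by
        rw [lt_div_iff₀ hhz]
        calc M * (hv * Z x) < M * (hv * η) := by
              apply mul_lt_mul_of_pos_left _ hM0
              exact mul_lt_mul_of_pos_left hZxlt hv0
          _ = |q|/2 := by rw [hη]; field_simp
          _ < |x| := hx2
      have h10 : |x| / (hv * Z x) = |x / (hv * Z x)| := by
        rw [abs_div, abs_of_pos hhz]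
      have h11 : |x / (hv * Z x)| ≤ |u| + |Gv/2| := by
        have : x / (hv * Z x) = u - Gv/2 := by rw [hu]; ring
        rw [this]
        exact abs_sub u (Gv/2)
      have h12 : |u| ≤ |Real.tan (A+ε)| + |Real.tan (A-ε)| := by
        apply abs_le.mpr
        constructor
        · linarith [neg_abs_le (Real.tan (A-ε)), abs_nonneg (Real.tan (A+ε))]
        · linarith [le_abs_self (Real.tan (A+ε)), abs_nonneg (Real.tan (A-ε))]
      have h13 : |Gv/2| = |Gv|/2 := by
        rw [abs_div]; norm_num
      rw [h10] at h9
      rw [h13] at h11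
      rw [hM] at h9
      linarith
  have evK : ∀ᶠ x in nhds q, |x| = Real.exp (-(Gv * (π/4))) := by
    filter_upwards [evZ, e1] with x hx0 hxU
    have h := hK x hxU
    rw [Kfun_def, hx0] at h
    norm_num at h
    rw [← hhv, ← hGv, Real.sqrt_sq_eq_abs] at h
    have hexp : Real.exp (Gv * (π/4)) * Real.exp (-(Gv * (π/4))) = 1 := by
      rw [← Real.exp_add]; norm_num
    have h' : |x| * Real.exp (Gv * (π/4)) = 1 := by
      rw [← h]; congr 1
      congr 1
      ring
    calc |x| = |x| * (Real.exp (Gv * (π/4)) * Real.exp (-(Gv * (π/4)))) := by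
          rw [hexp, mul_one]
      _ = (|x| * Real.exp (Gv * (π/4))) * Real.exp (-(Gv * (π/4))) := by ring
      _ = Real.exp (-(Gv * (π/4))) := by rw [h', one_mul]
  rcases Metric.eventually_nhds_iff.mp evK with ⟨δ, hδ, hball⟩
  set δ' := min (δ/2) (|q|/2) with hδ'
  have hδ'0 : 0 < δ' := lt_min (by linarith) (by linarith)
  have hd1 : |q| = Real.exp (-(Gv * (π/4))) := hball (by simpa using hδ)
  have hd2 : |q + δ'| = Real.exp (-(Gv * (π/4))) := by
    apply hball
    rw [Real.dist_eq]
    have : q + δ' - q = δ' := by ring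
    rw [this, abs_of_pos hδ'0]
    calc δ' ≤ δ/2 := min_le_left _ _
      _ < δ := by linarith
  have hsq2 : (q + δ')^2 = q^2 := by
    rw [← sq_abs, hd2, ← sq_abs q, hd1]
  have hδ'le : δ' ≤ |q|/2 := min_le_right _ _
  rcases abs_cases q with ⟨hqa, hqs⟩ | ⟨hqa, hqs⟩
  · have hqpos : 0 < q := lt_of_le_of_ne hqs (Ne.symm hqne)
    nlinarith
  · rw [hqa] at hδ'le
    nlinarith


theorem stmt_13 (g : ℝ) (hg1 : -2 < g) (hg2 : g < 2)
    (Z : ℝ → ℝ) (U : Set ℝ) (hU : IsOpen U) (q : ℝ) (hqU : q ∈ U)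
    (hZ : ContDiffOn ℝ 2 Z U)
    (hK : ∀ x ∈ U, Kfun g x (Z x) = 1)
    (hne : ∀ x ∈ U, Z x + g*x ≠ 0) :
    deriv Z q = -q / (Z q + g*q)
    ∧ deriv (deriv Z) q
        = -((Z q)^2 + g*q*(Z q) + q^2) / (Z q + g*q)^3 := by
  have hZq : Z q ≠ 0 := zq_ne g hg1 hg2 Z U hU q hqU hZ hK hne
  have hW : Z q + g*q ≠ 0 := hne q hqU
  set V := U ∩ Z ⁻¹' {(0:ℝ)}ᶜ with hV
  have hVopen : IsOpen V :=
    hZ.continuousOn.isOpen_inter_preimage hU isOpen_compl_singleton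
  have hqV : q ∈ V := ⟨hqU, by simpa using hZq⟩
  have hstep : ∀ x ∈ V, deriv Z x = -x / (Z x + g*x) := by
    intro x hxV
    have h := step g hg1 hg2 Z U hU hZ hK x hxV.1 (by simpa using hxV.2)
    have hWx : Z x + g*x ≠ 0 := hne x hxV.1
    rw [eq_div_iff hWx]
    linarith [h]
  have h1 : deriv Z q = -q / (Z q + g*q) := hstep q hqV
  refine ⟨h1, ?_⟩
  have hev : deriv Z =ᶠ[nhds q] fun x => -x / (Z x + g*x) :=
    Filter.eventually_of_mem (hVopen.mem_nhds hqV) hstep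
  rw [hev.deriv_eq]
  have hZd : HasDerivAt Z (deriv Z q) q :=
    ((hZ.contDiffAt (hU.mem_nhds hqU)).differentiableAt (by norm_num)).hasDerivAt
  have hWd : HasDerivAt (fun x => Z x + g*x) (deriv Z q + g) q := by
    have := hZd.fun_add ((hasDerivAt_id q).const_mul g)
    simpa using this
  have hdd : HasDerivAt (fun x => -x / (Z x + g*x))
      (((-1) * (Z q + g*q) - (-q) * (deriv Z q + g)) / (Z q + g*q)^2) q := by
    have hneg : HasDerivAt (fun x : ℝ => -x) (-1) q := by
      simpa using (hasDerivAt_id q).fun_neg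
    exact hneg.div hWd hW
  rw [hdd.deriv, h1]
  field_simp
  ring
end

section
/- The determinant of the quasi-Euclidean metric tensor n_{rs} = (1/h²) r_{rs} − (G²/4) L_r L_s is the constant h^{2(1−N)} det(r), independent of the point t ≠ 0. -/
open Matrix

theorem stmt_16 (N : ℕ) (g : ℝ) (hg1 : -2 < g) (hg2 : g < 2)
    (r : Matrix (Fin N) (Fin N) ℝ) (hr : r.PosDef) (t : Fin N → ℝ) (ht : t ≠ 0) :
    let h := Real.sqrt (1 - g^2/4)
    let G := g / h
    let S := Real.sqrt (t ⬝ᵥ r *ᵥ t)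
    let Llow : Fin N → ℝ := r *ᵥ (S⁻¹ • t)
    let nlow : Matrix (Fin N) (Fin N) ℝ :=
      (1/h^2) • r - (G^2/4) • Matrix.vecMulVec Llow Llow
    nlow.det = h ^ (2 * (1 - (N : ℤ))) * r.det := by
  intro h G S Llow nlow
  have hg4 : 0 < 1 - g^2/4 := by nlinarith
  have hh : 0 < h := Real.sqrt_pos.mpr hg4
  have hh2 : h^2 = 1 - g^2/4 := Real.sq_sqrt hg4.le
  have hhne : h ≠ 0 := hh.ne'
  have htRt : 0 < t ⬝ᵥ r *ᵥ t := by
    have := hr.dotProduct_mulVec_pos ht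
    simpa using this
  have hS : 0 < S := Real.sqrt_pos.mpr htRt
  have hS2 : S^2 = t ⬝ᵥ r *ᵥ t := Real.sq_sqrt htRt.le
  -- key dot product: Llow ⬝ᵥ (S⁻¹ • t) = 1
  have hdot : Llow ⬝ᵥ (S⁻¹ • t) = 1 := by
    have : Llow ⬝ᵥ (S⁻¹ • t) = S⁻¹ * (S⁻¹ * (t ⬝ᵥ r *ᵥ t)) := by
      show (r *ᵥ (S⁻¹ • t)) ⬝ᵥ (S⁻¹ • t) = _
      rw [dotProduct_comm, mulVec_smul, dotProduct_smul, smul_dotProduct]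
      simp [smul_eq_mul]
    rw [this, ← hS2]
    field_simp
  set w : Fin N → ℝ := (-(g^2/4)) • (S⁻¹ • t) with hw
  have hrw : r *ᵥ w = (-(g^2/4)) • Llow := by
    rw [hw, mulVec_smul]
  have hfact : nlow = ((1/h^2) • r) * (1 + replicateCol (Fin 1) w * replicateRow (Fin 1) Llow) := by
    rw [Matrix.mul_add, Matrix.mul_one, ← Matrix.mul_assoc]
    have hcol : ((1/h^2) • r) * replicateCol (Fin 1) w = replicateCol (Fin 1) ((1/h^2) • (r *ᵥ w)) := by
      rw [← replicateCol_mulVec, smul_mulVec]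
    rw [hcol, hrw]
    show nlow = (1/h^2) • r + replicateCol (Fin 1) ((1 / h ^ 2) • (-(g ^ 2 / 4)) • Llow) * replicateRow (Fin 1) Llow
    have : ((1 / h ^ 2) • (-(g ^ 2 / 4)) • Llow) = (-(G^2/4)) • Llow := by
      rw [smul_smul]
      congr 1
      field_simp [G]
      rw [show G = g / h from rfl, div_pow]
      field_simp
    rw [this, replicateCol_smul, Matrix.smul_mul]
    erw [← vecMulVec_eq (Fin 1)]
    show nlow = (1/h^2) • r + (-(G^2/4)) • vecMulVec Llow Llow
    rw [neg_smul, ← sub_eq_add_neg]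
  have hGdot : Llow ⬝ᵥ w = -(g^2/4) := by
    rw [hw, dotProduct_smul, hdot, smul_eq_mul, mul_one]
  rw [hfact, det_mul]
  erw [det_one_add_replicateCol_mul_replicateRow]
  rw [hGdot, det_smul]
  have h1 : (1 : ℝ) + -(g^2/4) = h^2 := by rw [hh2]; ring
  rw [h1]
  have hz : (h : ℝ) ^ (2 * (1 - (N : ℤ))) = (1/h^2)^N * h^2 := by
    have e : 2*(1-(N:ℤ)) = 2 + (-2)*N := by ring
    rw [e, zpow_add₀ hhne, _root_.zpow_mul, zpow_natCast]
    norm_num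
    ring
  rw [hz]
  simp only [Fintype.card_fin]
  ring
end

section
/- Under the radial map t̃ = ξ(t)·t/h with ξ(t) = (S²(t)/2)^{(h−1)/2}, the quasi-Euclidean metric n^{rs} = h² r^{rs} + (g²/4)L^r L^s transforms into c^{pq} = k^p_r k^q_s n^{rs} = ξ² r^{pq}, where k^p_q = ∂t̃^p/∂t^q; i.e., the quasi-Euclidean metric is conformally flat. -/
private lemma alg_sum (N : ℕ) (t : Fin N → ℝ) (Q A B C h2 : ℝ)
    (hQ : ∑ i, t i^2 = Q) (p q : Fin N) :
    ∑ r, ∑ s, (A * (if p = r then 1 else 0) + B * t p * t r)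
      * (A * (if q = s then 1 else 0) + B * t q * t s)
      * (h2 * (if r = s then 1 else 0) + C * t r * t s)
    = A*A*h2*(if p=q then 1 else 0)
      + t p * t q * (A*A*C + 2*A*B*h2 + 2*A*B*C*Q + B*B*h2*Q + B*B*C*Q*Q) := by
  have key : ∀ r, ∑ s, (A * (if q = s then 1 else 0) + B * t q * t s)
      * (h2 * (if r = s then 1 else 0) + C * t r * t s)
      = A * h2 * (if q = r then 1 else 0) + t q * t r * (A*C + B*h2 + B*C*Q) := by
    intro r
    have : ∀ s, (A * (if q = s then 1 else 0) + B * t q * t s)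
        * (h2 * (if r = s then 1 else 0) + C * t r * t s)
        = A*h2*((if q = s then 1 else 0)*(if r = s then 1 else 0))
          + A*C*(t r)*((if q = s then 1 else 0) * t s)
          + B*h2*t q*((if r = s then 1 else 0) * t s)
          + B*C*t q*t r*(t s^2) := by
      intro s; ring
    simp only [this, Finset.sum_add_distrib, ← Finset.mul_sum, hQ]
    have e1 : ∑ s, (if q = s then (1:ℝ) else 0)*(if r = s then 1 else 0)
        = (if q = r then 1 else 0) := by
      simp [Finset.sum_ite_eq', ite_and, eq_comm]
    have e2 : ∑ s, (if q = s then (1:ℝ) else 0) * t s = t q := by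
      simp [Finset.sum_ite_eq]
    have e3 : ∑ s, (if r = s then (1:ℝ) else 0) * t s = t r := by
      simp [Finset.sum_ite_eq]
    rw [e1, e2, e3]; ring
  have pull : ∀ r, (∑ s, (A * (if p = r then 1 else 0) + B * t p * t r)
      * (A * (if q = s then 1 else 0) + B * t q * t s)
      * (h2 * (if r = s then 1 else 0) + C * t r * t s))
      = (A * (if p = r then 1 else 0) + B * t p * t r) * ∑ s, (A * (if q = s then 1 else 0) + B * t q * t s)
      * (h2 * (if r = s then 1 else 0) + C * t r * t s) := by
    intro r; rw [Finset.mul_sum]; exact Finset.sum_congr rfl fun s _ => by ring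
  simp only [pull, key]
  have : ∀ r, (A * (if p = r then 1 else 0) + B * t p * t r)
      * (A * h2 * (if q = r then 1 else 0) + t q * t r * (A*C + B*h2 + B*C*Q))
      = A*(A*h2)*((if p = r then 1 else 0)*(if q = r then 1 else 0))
        + A*(t q)*(A*C + B*h2 + B*C*Q)*((if p = r then 1 else 0) * t r)
        + B*(t p)*(A*h2)*((if q = r then 1 else 0) * t r)
        + B*t p*t q*(A*C + B*h2 + B*C*Q)*(t r^2) := by
    intro r; ring
  simp only [this, Finset.sum_add_distrib, ← Finset.mul_sum, hQ]
  have e1 : ∑ r, (if p = r then (1:ℝ) else 0)*(if q = r then 1 else 0)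
      = (if p = q then 1 else 0) := by
    simp [Finset.sum_ite_eq', ite_and, eq_comm]
  have e2 : ∑ r, (if p = r then (1:ℝ) else 0) * t r = t p := by
    simp [Finset.sum_ite_eq]
  have e3 : ∑ r, (if q = r then (1:ℝ) else 0) * t r = t q := by
    simp [Finset.sum_ite_eq]
  rw [e1, e2, e3]; ring

private lemma kderiv (N : ℕ) (g : ℝ) (hg1 : -2 < g) (hg2 : g < 2)
    (t : Fin N → ℝ) (ht : t ≠ 0)
    (h : ℝ) (hh : h = Real.sqrt (1 - g^2/4)) (p q : Fin N) :
    fderiv ℝ (fun x : Fin N → ℝ => ((((Real.sqrt (∑ i, x i ^ 2)) ^ 2 / 2) ^ (((h - 1) / 2 : ℝ)) / h) • x) p) t (Pi.single q 1)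
      = (((∑ i, t i ^ 2) / 2) ^ (((h - 1) / 2 : ℝ)) / h) * (if p = q then 1 else 0)
        + (h-1) * (((∑ i, t i ^ 2) / 2) ^ (((h - 1) / 2 : ℝ))) * t p * t q / ((∑ i, t i ^ 2) * h) := by
  have hQpos : 0 < ∑ i, t i ^ 2 := by
    obtain ⟨i, hi⟩ := Function.ne_iff.mp ht
    have hi' : t i ≠ 0 := by simpa using hi
    exact Finset.sum_pos' (fun j _ => sq_nonneg _) ⟨i, Finset.mem_univ i, by positivity⟩
  set Q := ∑ i, t i ^ 2 with hQ
  set e : ℝ := (h - 1) / 2 with he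
  have hhpos : 0 < h := by
    rw [hh]; apply Real.sqrt_pos.mpr; nlinarith
  have hs : HasFDerivAt (fun x : Fin N → ℝ => ∑ i, x i ^ 2)
      (∑ i, (2 * t i) • (ContinuousLinearMap.proj i : (Fin N → ℝ) →L[ℝ] ℝ)) t := by
    apply HasFDerivAt.fun_sum
    intro i _
    have h1 : HasFDerivAt (fun x : Fin N → ℝ => x i)
        (ContinuousLinearMap.proj i : (Fin N → ℝ) →L[ℝ] ℝ) t := hasFDerivAt_apply i t
    simpa [two_mul, sq, add_smul] using h1.fun_mul h1
  have hne : (2:ℝ)⁻¹ * Q ≠ 0 := by positivity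
  have hT := ((((hs.const_mul 2⁻¹).rpow_const (p := e) (Or.inl hne)).mul_const h⁻¹).fun_mul
    (hasFDerivAt_apply (𝕜 := ℝ) p t))
  have hfun : (fun x : Fin N → ℝ => ((((Real.sqrt (∑ i, x i ^ 2)) ^ 2 / 2) ^ (e : ℝ) / h) • x) p)
      = fun x : Fin N → ℝ => (2⁻¹ * ∑ i, x i ^ 2) ^ (e:ℝ) * h⁻¹ * x p := by
    funext x
    rw [Pi.smul_apply, Real.sq_sqrt (Finset.sum_nonneg fun i _ => sq_nonneg _)]
    rw [smul_eq_mul]; ring_nf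
  rw [hfun, hT.fderiv]
  simp only [ContinuousLinearMap.add_apply, ContinuousLinearMap.smul_apply,
    ContinuousLinearMap.coe_sum', Finset.sum_apply, ContinuousLinearMap.proj_apply,
    Pi.single_apply, smul_eq_mul, mul_ite, mul_one, mul_zero]
  rw [Finset.sum_ite_eq' Finset.univ q (fun i => 2 * t i)]
  have hrw : ((2:ℝ)⁻¹ * Q) ^ ((e:ℝ) - 1) = (Q/2) ^ (e:ℝ) / (2⁻¹ * Q) := by
    rw [Real.rpow_sub (by positivity), Real.rpow_one]
    ring_nf
  simp only [Finset.mem_univ, if_true, ← hQ, hrw]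
  have h2 : ((2:ℝ)⁻¹ * Q) = Q / 2 := by ring
  rw [h2] at *
  field_simp
  ring

theorem stmt_17 (N : ℕ) (g : ℝ) (hg1 : -2 < g) (hg2 : g < 2)
    (t : Fin N → ℝ) (ht : t ≠ 0) :
    let h := Real.sqrt (1 - g^2/4)
    let S : (Fin N → ℝ) → ℝ := fun x => Real.sqrt (∑ i, x i ^ 2)
    let ξ : (Fin N → ℝ) → ℝ := fun x => (S x ^ 2 / 2) ^ (((h - 1) / 2 : ℝ))
    let tilde : (Fin N → ℝ) → (Fin N → ℝ) := fun x => (ξ x / h) • x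
    let L : Fin N → ℝ := fun i => t i / S t
    let nup : Matrix (Fin N) (Fin N) ℝ :=
      fun p q => h^2 * (if p = q then 1 else 0) + g^2/4 * L p * L q
    let k : Matrix (Fin N) (Fin N) ℝ :=
      fun p q => fderiv ℝ (fun x => tilde x p) t (Pi.single q 1)
    ∀ p q, (∑ r', ∑ s', k p r' * k q s' * nup r' s')
      = ξ t ^ 2 * (if p = q then 1 else 0) := by
  intro h S ξ tilde L nup k p q
  have hQpos : 0 < ∑ i, t i ^ 2 := by
    obtain ⟨i, hi⟩ := Function.ne_iff.mp ht
    have hi' : t i ≠ 0 := by simpa using hi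
    exact Finset.sum_pos' (fun j _ => sq_nonneg _) ⟨i, Finset.mem_univ i, by positivity⟩
  set Q := ∑ i, t i ^ 2 with hQdef
  have hhpos : 0 < h := by
    show (0:ℝ) < Real.sqrt (1 - g^2/4)
    apply Real.sqrt_pos.mpr; nlinarith
  have hsq : h^2 = 1 - g^2/4 := Real.sq_sqrt (by nlinarith)
  set X : ℝ := (Q / 2) ^ (((h - 1) / 2 : ℝ)) with hX
  set A : ℝ := X / h with hA
  set B : ℝ := (h - 1) * X / (Q * h) with hB
  set C : ℝ := g^2 / (4 * Q) with hC
  have hSt2 : S t ^ 2 = Q := Real.sq_sqrt (Finset.sum_nonneg fun i _ => sq_nonneg _)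
  have hStmul : S t * S t = Q := by rw [← sq]; exact hSt2
  have hxi : ξ t = X := by
    show (S t ^ 2 / 2) ^ (((h - 1) / 2 : ℝ)) = X
    rw [hSt2]
  have hk : ∀ a b, k a b = A * (if a = b then 1 else 0) + B * t a * t b := by
    intro a b
    have := kderiv N g hg1 hg2 t ht h rfl a b
    show fderiv ℝ (fun x => ((((Real.sqrt (∑ i, x i ^ 2)) ^ 2 / 2) ^ (((h - 1) / 2 : ℝ)) / h) • x) a) t (Pi.single b 1) = _
    rw [this, hA, hB, ← hQdef, ← hX]
    ring
  have hn : ∀ r s, nup r s = h^2 * (if r = s then 1 else 0) + C * t r * t s := by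
    intro r s
    show h^2 * (if r = s then 1 else 0) + g^2/4 * (t r / S t) * (t s / S t) = _
    have hStne : S t ≠ 0 := by
      intro h0
      rw [h0, mul_zero] at hStmul
      exact (ne_of_gt hQpos) hStmul.symm
    have step1 : g^2/4 * (t r / S t) * (t s / S t) = g^2 * t r * t s / (4 * (S t * S t)) := by
      ring
    rw [step1, hStmul, hC]
    ring
  simp only [hk, hn]
  rw [alg_sum N t Q A B C (h^2) hQdef.symm p q, hxi]
  have hQne : Q ≠ 0 := ne_of_gt hQpos
  have hhne : h ≠ 0 := ne_of_gt hhpos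
  have hcoef : A*A*C + 2*A*B*(h^2) + 2*A*B*C*Q + B*B*(h^2)*Q + B*B*C*Q*Q = 0 := by
    rw [hA, hB, hC]
    field_simp
    linear_combination (4*X^2*h^2) * hsq
  have hAA : A*A*(h^2) = X^2 := by
    rw [hA]; field_simp
  rw [hcoef, hAA]
  ring
end

section
/- The vector function t(s) = (S(s)/a)·(sin(h(α−ν))/sin(hα))·t₁ + (S(s)/S(Δs))·(sin(hν)/sin(hα))·t₂, with S(s) = sqrt(a² + 2bs + s²), ν = arctan(sqrt(a²−b²)·s/(a² + bs)), satisfies (t(s), t(s)) = S²(s) for all s in the admissible range, given that (t₁,t₁) = a², (t₂,t₂) = S²(Δs), and (t₁,t₂) = a S(Δs) cos(hα) where α = (1/h) arccos((a²+bΔs)/(a S(Δs))). -/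
open Matrix

lemma trig_key (x y : ℝ) :
    Real.sin x ^ 2 + Real.sin y ^ 2 + 2 * Real.sin x * Real.sin y * Real.cos (x + y)
      = Real.sin (x + y) ^ 2 := by
  rw [Real.sin_add, Real.cos_add]
  nlinarith [Real.sin_sq_add_cos_sq x, Real.sin_sq_add_cos_sq y]

theorem stmt_19 (N : ℕ) (t₁ t₂ : Fin N → ℝ) (a b Δs h : ℝ)
    (ha : a = Real.sqrt (t₁ ⬝ᵥ t₁)) (ha0 : 0 < a) (hb : |b| < a) (hΔ : 0 < Δs)
    (hh1 : 0 < h) (hh2 : h ≤ 1)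
    (S : ℝ → ℝ) (hS : S = fun s => Real.sqrt (a^2 + 2*b*s + s^2))
    (α : ℝ)
    (hα : α = (1/h) * Real.arccos ((t₁ ⬝ᵥ t₂)
        / (Real.sqrt (t₁ ⬝ᵥ t₁) * Real.sqrt (t₂ ⬝ᵥ t₂))))
    (ν : ℝ → ℝ)
    (hν : ν = fun s => Real.arctan (Real.sqrt (a^2 - b^2) * s / (a^2 + b*s)))
    (hsin : Real.sin (h*α) ≠ 0)
    (h2 : t₂ ⬝ᵥ t₂ = S Δs ^ 2)
    (h12 : t₁ ⬝ᵥ t₂ = a * S Δs * Real.cos (h*α)) :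
    ∀ s : ℝ,
      (((S s / a) * (Real.sin (h*(α - ν s)) / Real.sin (h*α))) • t₁
        + ((S s / S Δs) * (Real.sin (h * ν s) / Real.sin (h*α))) • t₂) ⬝ᵥ
      (((S s / a) * (Real.sin (h*(α - ν s)) / Real.sin (h*α))) • t₁
        + ((S s / S Δs) * (Real.sin (h * ν s) / Real.sin (h*α))) • t₂)
      = S s ^ 2 := by
  intro s
  obtain ⟨hb1, hb2⟩ := abs_lt.mp hb
  have hd : (0:ℝ) ≤ t₁ ⬝ᵥ t₁ := Finset.sum_nonneg fun i _ => mul_self_nonneg _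
  have hT1 : t₁ ⬝ᵥ t₁ = a ^ 2 := by rw [ha, Real.sq_sqrt hd]
  have hSΔ : S Δs ≠ 0 := by
    rw [hS]
    have : (0:ℝ) < a^2 + 2*b*Δs + Δs^2 := by nlinarith [sq_nonneg (b + Δs), mul_pos (sub_pos.mpr hb2) (show (0:ℝ) < a + b by linarith)]
    positivity
  have ha0' : a ≠ 0 := ne_of_gt ha0
  have h21 : t₂ ⬝ᵥ t₁ = a * S Δs * Real.cos (h*α) := by rw [dotProduct_comm, h12]
  have hkey := trig_key (h*(α - ν s)) (h * ν s)
  have hsum : h*(α - ν s) + h * ν s = h*α := by ring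
  rw [hsum] at hkey
  simp only [dotProduct_add, add_dotProduct, smul_dotProduct, dotProduct_smul,
    smul_eq_mul, hT1, h2, h12, h21]
  field_simp
  linear_combination (S s ^ 2) * hkey
end
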